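/- Assume: (i) 𝒰 is a compact subset of a real topological vector space and Z is a real normed space with int S ≠ ∅; (ii) the collection (u ↦ G_u(x))_{x∈X} is uniformly S⁺-concave, i.e. for all u₁, u₂ ∈ 𝒰 and λ₁, λ₂ ∈ S⁺ there exist ū ∈ 𝒰 and λ̄ ∈ S⁺ with λ₁(G_{u₁}(x)) + λ₂(G_{u₂}(x)) ≤ λ̄(G_ū(x)) for all x ∈ X; (iii) for each x ∈ X the map u ↦ G_u(x) is S⁺-upper semicontinuous, i.e. {(λ,u,r) ∈ S⁺×𝒰×ℝ : λ(G_u(x)) ≥ r} is closed in Z*(weak*) × 𝒰 × ℝ; (iv) for every u ∈ 𝒰 there exists x_u ∈ X with G_u(x_u) ∈ −int S. Then for every c ∈ X* with inf_{x∈F} ⟨c,x⟩ > −∞ there exists (ū, λ̄) ∈ 𝒰 × S⁺ such that inf_{x∈X} [⟨c,x⟩ + λ̄(G_ū(x))] = inf_{x∈F} ⟨c,x⟩ (stable robust strong duality for (RP_c)–(RD_c)). -/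

import Mathlib

open Pointwise Filter Metric Set Topology

section aux
variable {Z : Type*} [NormedAddCommGroup Z] [NormedSpace ℝ Z]

/-- Separation: a point outside the closed convex cone `-S` admits a positive functional
on `S` which is strictly positive at the point. -/
lemma sep_neg_cone {S : Set Z} (hS_closed : IsClosed S) (hS_conv : Convex ℝ S)
    (hS_cone : ∀ r : ℝ, 0 ≤ r → ∀ z ∈ S, r • z ∈ S) (h0S : (0:Z) ∈ S)
    {z : Z} (hz : z ∉ -S) :
    ∃ f : WeakDual ℝ Z, (∀ s ∈ S, 0 ≤ f s) ∧ 0 < f z := by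
  obtain ⟨f, u, hfu, huz⟩ :=
    geometric_hahn_banach_closed_point (hS_conv.neg) (hS_closed.neg) hz
  have h0 : (0:Z) ∈ -S := by simpa using h0S
  have hu0 : 0 < u := by simpa using hfu 0 h0
  refine ⟨f, fun s hs => ?_, ?_⟩
  · by_contra hneg
    push_neg at hneg
    obtain ⟨n, hn⟩ := exists_nat_gt (u / (-f s))
    have hmem : -((n:ℝ) • s) ∈ -S := by
      simp only [Set.mem_neg, neg_neg]
      exact hS_cone n (by positivity) s hs
    have := hfu _ hmem
    rw [map_neg, map_smul] at this
    have hfs : 0 < -f s := neg_pos.mpr hneg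
    have : u / (-f s) < n := hn
    have : u < (n:ℝ) * (-f s) := by
      rwa [div_lt_iff₀ hfs] at hn
    nlinarith [hfu _ hmem, (by simp [smul_eq_mul] : f (-((n:ℝ) • s)) = -((n:ℝ) * f s))]
  · exact hu0.trans huz

/-- The set of positive functionals bounded at an interior point is weak*-compact. -/
lemma compact_BT {S : Set Z} {s₀ : Z} (hs₀ : s₀ ∈ interior S) (T : ℝ) :
    IsCompact {l : WeakDual ℝ Z | (∀ z ∈ S, 0 ≤ l z) ∧ l s₀ ≤ T} := by
  obtain ⟨δ, hδpos, hδ⟩ := Metric.isOpen_iff.mp isOpen_interior s₀ hs₀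
  have hball : ball s₀ δ ⊆ S := hδ.trans interior_subset
  set T' : ℝ := max T 1 with hT'
  have hT1 : (1:ℝ) ≤ T' := le_max_right _ _
  have hT'pos : (0:ℝ) < T' := lt_of_lt_of_le one_pos hT1
  have hsub : {l : WeakDual ℝ Z | (∀ z ∈ S, 0 ≤ l z) ∧ l s₀ ≤ T} ⊆
      WeakDual.polar ℝ (ball (0:Z) (δ / T')) := by
    rintro l ⟨hpos, hbd⟩ x hx
    have hbd' : l s₀ ≤ T' := hbd.trans (le_max_left _ _)
    have hxT : ‖T' • x‖ < δ := by
      rw [norm_smul, Real.norm_eq_abs, abs_of_pos hT'pos]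
      rw [mem_ball_zero_iff] at hx
      calc T' * ‖x‖ < T' * (δ / T') := by
            exact mul_lt_mul_of_pos_left hx hT'pos
        _ = δ := by field_simp
    have hmem1 : s₀ + T' • x ∈ S := hball (by simpa [dist_eq_norm] using hxT)
    have hmem2 : s₀ - T' • x ∈ S := hball (by
      simp only [mem_ball, dist_eq_norm]
      simpa [norm_neg] using hxT)
    have h1 : 0 ≤ l s₀ + T' * l x := by simpa [map_add, map_smul] using hpos _ hmem1
    have h2 : 0 ≤ l s₀ - T' * l x := by
      have := hpos _ hmem2
      simpa [map_sub, map_smul] using this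
    have habs : |T' * l x| ≤ T' := by
      rw [abs_le]
      constructor <;> nlinarith [hpos s₀ (interior_subset hs₀)]
    rw [Real.norm_eq_abs]
    have hth : T' * |l x| ≤ T' := by rwa [abs_mul, abs_of_pos hT'pos] at habs
    exact (mul_le_iff_le_one_right hT'pos).mp hth
  have hclosed : IsClosed {l : WeakDual ℝ Z | (∀ z ∈ S, 0 ≤ l z) ∧ l s₀ ≤ T} := by
    have heq : {l : WeakDual ℝ Z | (∀ z ∈ S, 0 ≤ l z) ∧ l s₀ ≤ T} =
        (⋂ z ∈ S, {l : WeakDual ℝ Z | 0 ≤ l z}) ∩ {l : WeakDual ℝ Z | l s₀ ≤ T} := by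
      ext l; simp [Set.mem_iInter]
    rw [heq]
    exact ((isClosed_biInter fun z _ =>
        isClosed_le continuous_const (WeakDual.eval_continuous z)).inter
      (isClosed_le (WeakDual.eval_continuous s₀) continuous_const))
  exact (WeakDual.isCompact_polar ℝ (ball_mem_nhds _ (by positivity))).of_isClosed_subset
    hclosed hsub

lemma lemfin {X W : Type*}
    [AddCommGroup X] [Module ℝ X] [TopologicalSpace X]
    (S : Set Z) (h0S : (0:Z) ∈ S) (hS_closed : IsClosed S) (hS_conv : Convex ℝ S)
    (hS_cone : ∀ r : ℝ, 0 ≤ r → ∀ z ∈ S, r • z ∈ S)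
    (U : Set W) (hU : U.Nonempty) (G : W → X → Z)
    (hG_conv : ∀ u ∈ U, Convex ℝ {p : X × Z | p.2 - G u p.1 ∈ S})
    (hconc : ∀ u₁ ∈ U, ∀ u₂ ∈ U, ∀ l₁ l₂ : WeakDual ℝ Z,
      (∀ z ∈ S, 0 ≤ l₁ z) → (∀ z ∈ S, 0 ≤ l₂ z) →
      ∃ u₃ ∈ U, ∃ l₃ : WeakDual ℝ Z, (∀ z ∈ S, 0 ≤ l₃ z) ∧
        ∀ x : X, l₁ (G u₁ x) + l₂ (G u₂ x) ≤ l₃ (G u₃ x))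
    (c : WeakDual ℝ X) (a : ℝ)
    (ha : ∀ x : X, (∀ u ∈ U, G u x ∈ -S) → a ≤ c x)
    (γ : ℝ) (hγ : γ < a) (E : Finset X) :
    ∃ u ∈ U, ∃ l : WeakDual ℝ Z, (∀ z ∈ S, 0 ≤ l z) ∧
      ∀ x ∈ E, γ ≤ c x + l (G u x) := by
  classical
  by_contra hcon
  push_neg at hcon
  obtain ⟨u₀, hu₀⟩ := hU
  have zeroapp : ∀ w : Z, (0 : WeakDual ℝ Z) w = 0 := fun _ => rfl
  have hzero : ∀ z ∈ S, 0 ≤ (0 : WeakDual ℝ Z) z := by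
    intro z _; rw [zeroapp]
  have hEne : E.Nonempty := by
    obtain ⟨x, hx, -⟩ := hcon u₀ hu₀ 0 hzero
    exact ⟨x, hx⟩
  haveI : Nonempty ↥E := hEne.to_subtype
  set A : Set (↥E → ℝ) := {r | ∃ u ∈ U, ∃ l : WeakDual ℝ Z, (∀ z ∈ S, 0 ≤ l z) ∧
    ∀ i : ↥E, r i ≤ c i.1 + l (G u i.1)} with hA
  set Q : Set (↥E → ℝ) := {r | ∀ i : ↥E, γ < r i} with hQ
  have hAconv : Convex ℝ A := by
    rintro r ⟨u₁, hu₁, l₁, hl₁, hr₁⟩ r' ⟨u₂, hu₂, l₂, hl₂, hr₂⟩ s t hs ht hst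
    obtain ⟨u₃, hu₃, l₃, hl₃, hkey⟩ := hconc u₁ hu₁ u₂ hu₂ (s • l₁) (t • l₂)
      (fun z hz => by have := hl₁ z hz; show 0 ≤ s * l₁ z; positivity)
      (fun z hz => by have := hl₂ z hz; show 0 ≤ t * l₂ z; positivity)
    refine ⟨u₃, hu₃, l₃, hl₃, fun i => ?_⟩
    have h3 := hkey i.1
    have happ1 : (s • l₁) (G u₁ i.1) = s * l₁ (G u₁ i.1) := rfl
    have happ2 : (t • l₂) (G u₂ i.1) = t * l₂ (G u₂ i.1) := rfl
    rw [happ1, happ2] at h3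
    have h1 := hr₁ i
    have h2 := hr₂ i
    show s * r i + t * r' i ≤ c i.1 + l₃ (G u₃ i.1)
    have e1 := mul_le_mul_of_nonneg_left h1 hs
    have e2 := mul_le_mul_of_nonneg_left h2 ht
    have e1' : s * (c i.1 + l₁ (G u₁ i.1)) = s * c i.1 + s * l₁ (G u₁ i.1) := by ring
    have e2' : t * (c i.1 + l₂ (G u₂ i.1)) = t * c i.1 + t * l₂ (G u₂ i.1) := by ring
    have e3 : s * c i.1 + t * c i.1 = c i.1 := by linear_combination (c i.1) * hst
    rw [e1'] at e1
    rw [e2'] at e2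
    linarith
  have hQconv : Convex ℝ Q := by
    have hQpi : Q = Set.pi Set.univ (fun _ : ↥E => Set.Ioi γ) := by
      ext r; simp [hQ, Set.mem_pi]
    rw [hQpi]
    exact convex_pi fun _ _ => convex_Ioi γ
  have hQopen : IsOpen Q := by
    have hQpi : Q = Set.pi Set.univ (fun _ : ↥E => Set.Ioi γ) := by
      ext r; simp [hQ, Set.mem_pi]
    rw [hQpi]
    exact isOpen_set_pi Set.finite_univ fun _ _ => isOpen_Ioi
  have hdisj : Disjoint Q A := by
    rw [Set.disjoint_left]
    rintro r hrQ ⟨u, hu, l, hl, hr⟩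
    obtain ⟨x, hxE, hxlt⟩ := hcon u hu l hl
    have h1 : γ < r ⟨x, hxE⟩ := hrQ ⟨x, hxE⟩
    have h2 := hr ⟨x, hxE⟩
    simp only at h2
    linarith
  obtain ⟨f, v, hfQ, hfA⟩ := geometric_hahn_banach_open hQconv hQopen hAconv hdisj
  set p : ↥E → ℝ := fun i => f (Pi.single i (1:ℝ)) with hp
  have hsingle : ∀ (i : ↥E) (ri : ℝ), (Pi.single i ri : ↥E → ℝ) = ri • (Pi.single i (1:ℝ) : ↥E → ℝ) := by
    intro i ri
    funext j
    rcases eq_or_ne j i with h | h <;>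
      simp [Pi.single_apply, h, Pi.smul_apply, smul_eq_mul]
  have frep : ∀ r : ↥E → ℝ, f r = ∑ i, r i * p i := by
    intro r
    conv_lhs => rw [← Finset.univ_sum_single r]
    rw [map_sum]
    refine Finset.sum_congr rfl fun i _ => ?_
    rw [hsingle i (r i), map_smul, smul_eq_mul]
  set r₀ : ↥E → ℝ := fun i : ↥E => c i.1 with hr₀
  have hr₀A : r₀ ∈ A :=
    ⟨u₀, hu₀, 0, hzero, fun i => by rw [zeroapp]; show c i.1 ≤ c i.1 + 0; linarith⟩
  have hQne : (fun _ : ↥E => γ + 1) ∈ Q := fun i => by norm_num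
  have hpneg : ∀ i, p i ≤ 0 := by
    intro i
    by_contra hpos
    push_neg at hpos
    obtain ⟨n, hn⟩ := exists_nat_gt ((f r₀ - v) / p i)
    rw [div_lt_iff₀ hpos] at hn
    have hmemA : r₀ - (n:ℝ) • (Pi.single i (1:ℝ) : ↥E → ℝ) ∈ A := by
      refine ⟨u₀, hu₀, 0, hzero, fun j => ?_⟩
      have happ : (r₀ - (n:ℝ) • (Pi.single i (1:ℝ) : ↥E → ℝ)) j
          = r₀ j - (n:ℝ) * (Pi.single i (1:ℝ) : ↥E → ℝ) j := rfl
      have hnn : 0 ≤ (n:ℝ) * (Pi.single i (1:ℝ) : ↥E → ℝ) j := by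
        rcases eq_or_ne j i with h | h <;> simp [Pi.single_apply, h]
      have hrj : r₀ j = c j.1 := rfl
      rw [happ, zeroapp, hrj]
      linarith
    have hv := hfA _ hmemA
    rw [map_sub, map_smul, smul_eq_mul] at hv
    have hpi : f (Pi.single i (1:ℝ)) = p i := rfl
    rw [hpi] at hv
    have hfr : v ≤ f r₀ := hfA _ hr₀A
    linarith
  have hpne : ∃ i, p i < 0 := by
    by_contra hall
    push_neg at hall
    have hp0 : ∀ i, p i = 0 := fun i => le_antisymm (hpneg i) (hall i)
    have hf0 : ∀ r, f r = 0 := by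
      intro r; rw [frep]; simp [hp0]
    have h1 := hfQ _ hQne
    have h2 := hfA _ hr₀A
    rw [hf0] at h1
    rw [hf0] at h2
    linarith
  set σ : ℝ := -∑ i, p i with hσ
  have hps : ∑ i, p i = -σ := by rw [hσ, neg_neg]
  have hσpos : 0 < σ := by
    rw [hσ, neg_pos]
    obtain ⟨i₀, hi₀⟩ := hpne
    calc ∑ i, p i < ∑ _i : ↥E, (0:ℝ) := by
          refine Finset.sum_lt_sum (fun i _ => hpneg i) ⟨i₀, Finset.mem_univ _, hi₀⟩
      _ = 0 := by simp
  set t : ↥E → ℝ := fun i => -p i / σ with ht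
  have htnn : ∀ i, 0 ≤ t i := fun i => by
    have := hpneg i
    rw [ht]
    have h1 : (0:ℝ) ≤ -p i := by linarith
    positivity
  have htsum : ∑ i, t i = 1 := by
    rw [ht]
    simp only
    rw [← Finset.sum_div, Finset.sum_neg_distrib, hps, neg_neg, div_self (ne_of_gt hσpos)]
  -- the Q-side bound
  have hvγ : -v / σ ≤ γ := by
    have hε : ∀ ε > 0, -v / σ < γ + ε := by
      intro ε hεpos
      have hlt := hfQ (fun _ => γ + ε) (fun i => by norm_num [hεpos])
      rw [frep] at hlt
      have hbeta : ∑ i, (fun _ : ↥E => γ + ε) i * p i = ∑ i, (γ + ε) * p i :=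
        Finset.sum_congr rfl fun i _ => rfl
      rw [hbeta, ← Finset.mul_sum, hps] at hlt
      rw [div_lt_iff₀ hσpos]
      nlinarith
    by_contra hlt
    push_neg at hlt
    have := hε ((-v / σ - γ) / 2) (by linarith)
    linarith
  -- the A-side bound, combined
  have hkey1 : ∀ u ∈ U, ∀ l : WeakDual ℝ Z, (∀ z ∈ S, 0 ≤ l z) →
      ∑ i, t i * (c i.1 + l (G u i.1)) ≤ γ := by
    intro u hu l hl
    set r : ↥E → ℝ := fun i => c i.1 + l (G u i.1) with hrdef
    have hrA : r ∈ A := ⟨u, hu, l, hl, fun i => le_of_eq rfl⟩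
    have h1 : v ≤ f r := hfA _ hrA
    rw [frep] at h1
    have h2 : ∑ i, r i * p i = -σ * ∑ i, t i * r i := by
      rw [Finset.mul_sum]
      refine Finset.sum_congr rfl fun i _ => ?_
      rw [ht]
      simp only
      field_simp
    rw [h2] at h1
    have h3 : ∑ i, t i * r i ≤ -v / σ := by
      rw [le_div_iff₀ hσpos]
      nlinarith
    exact h3.trans hvγ
  -- the aggregated point
  set xb : X := ∑ i, t i • (i.1 : X) with hxb
  have hconvG : ∀ u ∈ U, (∑ i, t i • G u i.1) - G u xb ∈ S := by
    intro u hu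
    have hmem : ∀ i : ↥E, ((i.1 : X), G u i.1) ∈ {p : X × Z | p.2 - G u p.1 ∈ S} := by
      intro i; simp [h0S]
    have hsum := (hG_conv u hu).sum_mem (t := Finset.univ)
      (fun i _ => htnn i) htsum (fun i _ => hmem i)
    have heq : (∑ i, t i • ((i.1 : X), G u i.1)) =
        ((∑ i, t i • (i.1 : X)), (∑ i, t i • G u i.1)) := by
      rw [Prod.ext_iff]
      constructor
      · rw [Prod.fst_sum]
        exact Finset.sum_congr rfl fun i _ => rfl
      · rw [Prod.snd_sum]
        exact Finset.sum_congr rfl fun i _ => rfl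
    rw [heq] at hsum
    exact hsum
  have hkeyX : ∀ u ∈ U, ∀ l : WeakDual ℝ Z, (∀ z ∈ S, 0 ≤ l z) →
      c xb + l (G u xb) ≤ γ := by
    intro u hu l hl
    have h0 := hl _ (hconvG u hu)
    rw [map_sub, map_sum] at h0
    simp only [map_smul, smul_eq_mul] at h0
    have h1 : l (G u xb) ≤ ∑ i, t i * l (G u i.1) := by linarith
    have h2 : c xb = ∑ i, t i * c i.1 := by
      rw [hxb, map_sum]
      simp [map_smul]
    have h3 : ∑ i, t i * c i.1 + ∑ i, t i * l (G u i.1)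
        = ∑ i, t i * (c i.1 + l (G u i.1)) := by
      rw [← Finset.sum_add_distrib]
      exact Finset.sum_congr rfl fun i _ => by ring
    have h4 := hkey1 u hu l hl
    rw [← h3] at h4
    linarith
  have hxbF : ∀ u ∈ U, G u xb ∈ -S := by
    intro u hu
    by_contra hnot
    obtain ⟨g, hgpos, hgz⟩ := sep_neg_cone hS_closed hS_conv hS_cone h0S hnot
    obtain ⟨n, hn⟩ := exists_nat_gt ((γ - c xb) / g (G u xb))
    have hng : ∀ z ∈ S, 0 ≤ ((n:ℝ) • g) z := by
      intro z hz
      show 0 ≤ (n:ℝ) * g z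
      have := hgpos z hz
      positivity
    have hk := hkeyX u hu ((n:ℝ) • g) hng
    have happ : ((n:ℝ) • g) (G u xb) = (n:ℝ) * g (G u xb) := rfl
    rw [happ] at hk
    rw [div_lt_iff₀ hgz] at hn
    linarith
  have h1 : a ≤ c xb := ha xb hxbF
  have h2 : c xb ≤ γ := by
    have hk := hkeyX u₀ hu₀ 0 hzero
    rw [zeroapp] at hk
    linarith
  linarith

end aux

/-- Corollary 2.3 / `cor_3.1bis`: sufficient conditions for stable robust strong duality
for the pair (RP_c)-(RD_c). -/
theorem stmt6
    {X Z W : Type*}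
    [AddCommGroup X] [Module ℝ X] [TopologicalSpace X] [IsTopologicalAddGroup X]
    [ContinuousSMul ℝ X] [LocallyConvexSpace ℝ X] [T2Space X]
    [NormedAddCommGroup Z] [NormedSpace ℝ Z]
    [AddCommGroup W] [Module ℝ W] [TopologicalSpace W] [IsTopologicalAddGroup W]
    [ContinuousSMul ℝ W]
    (S : Set Z) (hS_ne : S.Nonempty) (hS_closed : IsClosed S) (hS_conv : Convex ℝ S)
    (hS_cone : ∀ r : ℝ, 0 ≤ r → ∀ z ∈ S, r • z ∈ S)
    (hS_int : (interior S).Nonempty)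
    (U : Set W) (hU : U.Nonempty) (hU_cpt : IsCompact U) (G : W → X → Z)
    (hG_conv : ∀ u ∈ U, Convex ℝ {p : X × Z | p.2 - G u p.1 ∈ S})
    (hG_closed : ∀ u ∈ U, IsClosed {p : X × Z | p.2 - G u p.1 ∈ S})
    (hconc : ∀ u₁ ∈ U, ∀ u₂ ∈ U, ∀ l₁ l₂ : WeakDual ℝ Z,
      (∀ z ∈ S, 0 ≤ l₁ z) → (∀ z ∈ S, 0 ≤ l₂ z) →
      ∃ u₃ ∈ U, ∃ l₃ : WeakDual ℝ Z, (∀ z ∈ S, 0 ≤ l₃ z) ∧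
        ∀ x : X, l₁ (G u₁ x) + l₂ (G u₂ x) ≤ l₃ (G u₃ x))
    (husc : ∀ x : X, IsClosed {p : WeakDual ℝ Z × U × ℝ |
      (∀ z ∈ S, 0 ≤ p.1 z) ∧ p.2.2 ≤ p.1 (G p.2.1.1 x)})
    (hSlater : ∀ u ∈ U, ∃ x : X, G u x ∈ -interior S)
    (hF : {x : X | ∀ u ∈ U, G u x ∈ -S}.Nonempty) :
    ∀ c : WeakDual ℝ X,
      ⊥ < ⨅ x : {x : X | ∀ u ∈ U, G u x ∈ -S}, ((c x.1 : ℝ) : EReal) →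
      ∃ u ∈ U, ∃ l : WeakDual ℝ Z, (∀ z ∈ S, 0 ≤ l z) ∧
        (⨅ x : X, ((c x + l (G u x) : ℝ) : EReal)) =
          ⨅ x : {x : X | ∀ u ∈ U, G u x ∈ -S}, ((c x.1 : ℝ) : EReal) := by
  intro c hlt
  classical
  obtain ⟨s₀, hs₀⟩ := hS_int
  have h0S : (0:Z) ∈ S := by
    obtain ⟨z, hz⟩ := hS_ne
    simpa using hS_cone 0 le_rfl z hz
  have zeroapp : ∀ w : Z, (0 : WeakDual ℝ Z) w = 0 := fun _ => rfl
  haveI hFne : Nonempty {x : X | ∀ u ∈ U, G u x ∈ -S} := hF.to_subtype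
  set αE : EReal := ⨅ x : {x : X | ∀ u ∈ U, G u x ∈ -S}, ((c x.1 : ℝ) : EReal) with hαE
  obtain ⟨x₀, hx₀⟩ := hF
  have hle : αE ≤ ((c x₀ : ℝ) : EReal) := iInf_le (fun x : {x : X | ∀ u ∈ U, G u x ∈ -S} => ((c x.1 : ℝ) : EReal)) ⟨x₀, hx₀⟩
  have hnetop : αE ≠ ⊤ := (lt_of_le_of_lt hle (EReal.coe_lt_top _)).ne
  have hnebot : αE ≠ ⊥ := hlt.ne'
  set a : ℝ := αE.toReal with ha
  have hcoe : ((a : ℝ) : EReal) = αE := EReal.coe_toReal hnetop hnebot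
  have Fact1 : ∀ x : X, (∀ u ∈ U, G u x ∈ -S) → a ≤ c x := by
    intro x hx
    have h1 : αE ≤ ((c x : ℝ) : EReal) := iInf_le (fun x : {x : X | ∀ u ∈ U, G u x ∈ -S} => ((c x.1 : ℝ) : EReal)) ⟨x, hx⟩
    rw [← hcoe] at h1
    exact EReal.coe_le_coe_iff.mp h1
  haveI : CompactSpace ↥U := isCompact_iff_compactSpace.mp hU_cpt
  -- the directed family of near-optimal dual pairs
  set K : Finset X × ℕ → Set (↥U × WeakDual ℝ Z) := fun En =>
    {y | (∀ z ∈ S, 0 ≤ y.2 z) ∧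
      ∀ x ∈ En.1, a - 1/((En.2:ℝ)+1) ≤ c x + y.2 (G y.1.1 x)} with hK
  have hKne : ∀ En, (K En).Nonempty := by
    intro En
    have hγ : a - 1/((En.2:ℝ)+1) < a := by
      have h1 : (0:ℝ) < 1/((En.2:ℝ)+1) := by positivity
      linarith
    obtain ⟨u, hu, l, hl, hbd⟩ := lemfin S h0S hS_closed hS_conv hS_cone U hU G hG_conv hconc
      c a Fact1 _ hγ En.1
    exact ⟨(⟨u, hu⟩, l), hl, fun x hx => hbd x hx⟩
  have hKmono : ∀ p q : Finset X × ℕ, p.1 ⊆ q.1 → p.2 ≤ q.2 → K q ⊆ K p := by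
    rintro p q h1 h2 y ⟨hy1, hy2⟩
    refine ⟨hy1, fun x hx => ?_⟩
    have h3 := hy2 x (h1 hx)
    have hmono : 1/((q.2:ℝ)+1) ≤ 1/((p.2:ℝ)+1) := by
      apply one_div_le_one_div_of_le (by positivity)
      have : (p.2:ℝ) ≤ (q.2:ℝ) := by exact_mod_cast h2
      linarith
    linarith
  set ℱ : Filter (↥U × WeakDual ℝ Z) := ⨅ En, 𝓟 (K En) with hℱ
  have hdir : Directed (· ≥ ·) (fun En => 𝓟 (K En)) := by
    intro p q
    refine ⟨(p.1 ∪ q.1, max p.2 q.2), ?_, ?_⟩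
    · exact principal_mono.mpr (hKmono _ _ Finset.subset_union_left (le_max_left _ _))
    · exact principal_mono.mpr (hKmono _ _ Finset.subset_union_right (le_max_right _ _))
  haveI hFneBot : ℱ.NeBot := by
    rw [hℱ]
    exact iInf_neBot_of_directed' hdir fun En => principal_neBot_iff.mpr (hKne En)
  have hKmem : ∀ En, K En ∈ ℱ := fun En => mem_iInf_of_mem En (mem_principal_self _)
  have hClclosed : ∀ (x : X) (r : ℝ),
      IsClosed {y : ↥U × WeakDual ℝ Z | (∀ z ∈ S, 0 ≤ y.2 z) ∧ r ≤ y.2 (G y.1.1 x)} :=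
    fun x r => (husc x).preimage
      ((continuous_snd.prodMk (continuous_fst.prodMk continuous_const)) :
        Continuous fun y : ↥U × WeakDual ℝ Z => (y.2, y.1, r))
  by_cases hbdd : ∃ T : ℝ, (ℱ ⊓ 𝓟 {y : ↥U × WeakDual ℝ Z | y.2 s₀ ≤ T}).NeBot
  · -- bounded case: extract a cluster point, which is the desired dual solution
    obtain ⟨T, hT⟩ := hbdd
    haveI := hT
    have hBcpt : IsCompact {l : WeakDual ℝ Z | (∀ z ∈ S, 0 ≤ l z) ∧ l s₀ ≤ T} :=
      compact_BT hs₀ T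
    have hCcpt : IsCompact ((Set.univ : Set ↥U) ×ˢ
        {l : WeakDual ℝ Z | (∀ z ∈ S, 0 ≤ l z) ∧ l s₀ ≤ T}) := isCompact_univ.prod hBcpt
    have hCmem : ((Set.univ : Set ↥U) ×ˢ
        {l : WeakDual ℝ Z | (∀ z ∈ S, 0 ≤ l z) ∧ l s₀ ≤ T}) ∈
        ℱ ⊓ 𝓟 {y : ↥U × WeakDual ℝ Z | y.2 s₀ ≤ T} := by
      have h1 : K (∅, 0) ∈ ℱ ⊓ 𝓟 {y : ↥U × WeakDual ℝ Z | y.2 s₀ ≤ T} :=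
        mem_inf_of_left (hKmem _)
      have h2 : {y : ↥U × WeakDual ℝ Z | y.2 s₀ ≤ T} ∈
          ℱ ⊓ 𝓟 {y : ↥U × WeakDual ℝ Z | y.2 s₀ ≤ T} :=
        mem_inf_of_right (mem_principal_self _)
      filter_upwards [h1, h2] with y hy1 hy2
      exact ⟨Set.mem_univ _, hy1.1, hy2⟩
    obtain ⟨yb, _hybmem, hybcl⟩ := hCcpt.exists_clusterPt (le_principal_iff.mpr hCmem)
    have hybℱ : ClusterPt yb ℱ := hybcl.mono inf_le_left
    obtain ⟨ub, lb⟩ := yb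
    have hmain : ∀ (x : X) (n : ℕ), (∀ z ∈ S, 0 ≤ lb z) ∧
        a - 1/((n:ℝ)+1) - c x ≤ lb (G ub.1 x) := by
      intro x n
      have hsub : K ({x}, n) ⊆
          {y : ↥U × WeakDual ℝ Z | (∀ z ∈ S, 0 ≤ y.2 z) ∧
            a - 1/((n:ℝ)+1) - c x ≤ y.2 (G y.1.1 x)} := by
        rintro y ⟨h1, h2⟩
        have h3 := h2 x (Finset.mem_singleton_self x)
        exact ⟨h1, by linarith⟩
      have hmem : {y : ↥U × WeakDual ℝ Z | (∀ z ∈ S, 0 ≤ y.2 z) ∧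
            a - 1/((n:ℝ)+1) - c x ≤ y.2 (G y.1.1 x)} ∈ ℱ :=
        mem_of_superset (hKmem ({x}, n)) hsub
      have hcl : (ub, lb) ∈ closure {y : ↥U × WeakDual ℝ Z | (∀ z ∈ S, 0 ≤ y.2 z) ∧
            a - 1/((n:ℝ)+1) - c x ≤ y.2 (G y.1.1 x)} :=
        mem_closure_iff_clusterPt.mpr (hybℱ.mono (le_principal_iff.mpr hmem))
      rwa [(hClclosed x _).closure_eq] at hcl
    have hpos : ∀ z ∈ S, 0 ≤ lb z := (hmain x₀ 0).1
    have hineq : ∀ x : X, a ≤ c x + lb (G ub.1 x) := by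
      intro x
      by_contra hc
      push_neg at hc
      obtain ⟨n, hn⟩ := exists_nat_one_div_lt
        (show (0:ℝ) < a - (c x + lb (G ub.1 x)) by linarith)
      have h4 := (hmain x n).2
      linarith
    refine ⟨ub.1, ub.2, lb, hpos, le_antisymm ?_ ?_⟩
    · refine le_iInf fun x => ?_
      have h1 : (⨅ x : X, ((c x + lb (G ub.1 x) : ℝ) : EReal)) ≤
          ((c x.1 + lb (G ub.1 x.1) : ℝ) : EReal) := iInf_le _ x.1
      refine h1.trans ?_
      rw [EReal.coe_le_coe_iff]
      have hxF := x.2 ub.1 ub.2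
      rw [Set.mem_neg] at hxF
      have h2 := hpos _ hxF
      rw [map_neg] at h2
      linarith
    · rw [← hcoe]
      refine le_iInf fun x => ?_
      rw [EReal.coe_le_coe_iff]
      exact hineq x
  · -- unbounded case: the multipliers blow up, contradicting the Slater condition
    exfalso
    push_neg at hbdd
    have hev : ∀ T : ℝ, {y : ↥U × WeakDual ℝ Z | T < y.2 s₀} ∈ ℱ := by
      intro T
      have hbot : ℱ ⊓ 𝓟 {y : ↥U × WeakDual ℝ Z | y.2 s₀ ≤ T} = ⊥ := by
        have h := hbdd T
        exact h
      have h1 := inf_principal_eq_bot.mp hbot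
      have h2 : {y : ↥U × WeakDual ℝ Z | y.2 s₀ ≤ T}ᶜ =
          {y : ↥U × WeakDual ℝ Z | T < y.2 s₀} := by
        ext y; simp [not_le]
      rwa [h2] at h1
    set g : ↥U × WeakDual ℝ Z → ↥U × WeakDual ℝ Z :=
      fun y => (y.1, (y.2 s₀)⁻¹ • y.2) with hg
    set B₁ : Set (WeakDual ℝ Z) := {l | (∀ z ∈ S, 0 ≤ l z) ∧ l s₀ = 1} with hB₁
    have hB₁closed : IsClosed B₁ := by
      have heq : B₁ = (⋂ z ∈ S, {l : WeakDual ℝ Z | 0 ≤ l z}) ∩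
          {l : WeakDual ℝ Z | l s₀ = 1} := by
        ext l; simp [hB₁, Set.mem_iInter]
      rw [heq]
      exact ((isClosed_biInter fun z _ =>
          isClosed_le continuous_const (WeakDual.eval_continuous z)).inter
        (isClosed_eq (WeakDual.eval_continuous s₀) continuous_const))
    have hB₁cpt : IsCompact B₁ :=
      (compact_BT hs₀ 1).of_isClosed_subset hB₁closed (fun l hl => ⟨hl.1, le_of_eq hl.2⟩)
    have hC₁mem : ((Set.univ : Set ↥U) ×ˢ B₁) ∈ Filter.map g ℱ := by
      rw [mem_map]
      refine mem_of_superset (inter_mem (hKmem (∅,0)) (hev 0)) ?_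
      rintro y ⟨hy1, hy2⟩
      have ht : 0 < y.2 s₀ := hy2
      refine ⟨Set.mem_univ _, ?_, ?_⟩
      · intro z hz
        have h3 := hy1.1 z hz
        show 0 ≤ (y.2 s₀)⁻¹ * y.2 z
        positivity
      · show (y.2 s₀)⁻¹ * y.2 s₀ = 1
        field_simp
    haveI : (Filter.map g ℱ).NeBot := hFneBot.map g
    obtain ⟨q, hqmem, hqcl⟩ :=
      (isCompact_univ.prod hB₁cpt).exists_clusterPt (le_principal_iff.mpr hC₁mem)
    obtain ⟨ub, μ⟩ := q
    have hμ1 : μ s₀ = 1 := hqmem.2.2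
    obtain ⟨xs, hxs⟩ := hSlater ub.1 ub.2
    have hmemhusc : ((μ, (ub, (0:ℝ))) : WeakDual ℝ Z × ↥U × ℝ) ∈
        {p : WeakDual ℝ Z × U × ℝ | (∀ z ∈ S, 0 ≤ p.1 z) ∧ p.2.2 ≤ p.1 (G p.2.1.1 xs)} := by
      rw [← (husc xs).closure_eq]
      rw [mem_closure_iff_nhds]
      intro t ht
      rw [nhds_prod_eq, Filter.mem_prod_iff] at ht
      obtain ⟨V, hV, W1, hW1, hsub1⟩ := ht
      rw [nhds_prod_eq, Filter.mem_prod_iff] at hW1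
      obtain ⟨Wu, hWu, I, hI, hsub2⟩ := hW1
      obtain ⟨ε, hεpos, hballI⟩ := Metric.mem_nhds_iff.mp hI
      set κ : ℝ := a - 1 - c xs with hκ
      set T₀ : ℝ := max (|κ|/ε) 1 with hT₀
      have hKb : (K ({xs}, 0) ∩ {y : ↥U × WeakDual ℝ Z | T₀ < y.2 s₀}) ∈ ℱ :=
        inter_mem (hKmem _) (hev T₀)
      have hWV : (Wu ×ˢ V) ∈ 𝓝 ((ub, μ)) := by
        rw [nhds_prod_eq]; exact Filter.prod_mem_prod hWu hV
      haveI hne : (𝓝 ((ub, μ)) ⊓ Filter.map g ℱ).NeBot := hqcl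
      have hinter : ((Wu ×ˢ V) ∩
          g '' (K ({xs}, 0) ∩ {y : ↥U × WeakDual ℝ Z | T₀ < y.2 s₀})).Nonempty :=
        Filter.nonempty_of_mem
          (inter_mem (mem_inf_of_left hWV) (mem_inf_of_right (Filter.image_mem_map hKb)))
      obtain ⟨q', hq'WV, y, hyK, hgy⟩ := hinter
      have hq'W : q'.1 ∈ Wu := hq'WV.1
      have hq'V : q'.2 ∈ V := hq'WV.2
      have hyS : ∀ z ∈ S, 0 ≤ y.2 z := hyK.1.1
      have hty : T₀ < y.2 s₀ := hyK.2
      have hT₀1 : (1:ℝ) ≤ T₀ := le_max_right _ _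
      have htpos : 0 < y.2 s₀ := by linarith
      have hcx : κ ≤ y.2 (G y.1.1 xs) := by
        have h3 := hyK.1.2 xs (Finset.mem_singleton_self xs)
        have h4 : ((0:ℕ):ℝ) + 1 = 1 := by norm_num
        rw [hκ]
        rw [h4] at h3
        linarith
      have hq1 : q'.1 = y.1 := by rw [← hgy]
      have hq2 : q'.2 = (y.2 s₀)⁻¹ • y.2 := by rw [← hgy]
      refine ⟨(((y.2 s₀)⁻¹ • y.2 : WeakDual ℝ Z), (y.1, κ / y.2 s₀)), ?_, ?_, ?_⟩
      · apply hsub1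
        refine ⟨by rw [← hq2]; exact hq'V, ?_⟩
        apply hsub2
        refine ⟨by rw [← hq1]; exact hq'W, ?_⟩
        apply hballI
        rw [Metric.mem_ball, dist_zero_right, Real.norm_eq_abs, abs_div,
          abs_of_pos htpos]
        rw [div_lt_iff₀ htpos]
        have h5 : |κ| / ε < y.2 s₀ := lt_of_le_of_lt (le_max_left _ _) hty
        rw [div_lt_iff₀ hεpos] at h5
        linarith [mul_comm ε (y.2 s₀)]
      · intro z hz
        have h3 := hyS z hz
        show 0 ≤ (y.2 s₀)⁻¹ * y.2 z
        positivity
      · show κ / y.2 s₀ ≤ (y.2 s₀)⁻¹ * y.2 (G y.1.1 xs)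
        rw [inv_mul_eq_div]
        exact (div_le_div_iff_of_pos_right htpos).mpr hcx
    have hμpos : ∀ z ∈ S, 0 ≤ μ z := hmemhusc.1
    have hge : (0:ℝ) ≤ μ (G ub.1 xs) := hmemhusc.2
    rw [Set.mem_neg] at hxs
    obtain ⟨ε', hε'pos, hball'⟩ := Metric.isOpen_iff.mp isOpen_interior _ hxs
    have hc₀ : 0 < ε' / 2 / (‖s₀‖ + 1) := by positivity
    set w : Z := -(ε' / 2 / (‖s₀‖ + 1)) • s₀ with hw
    have hnorm : ‖w‖ < ε' := by
      rw [hw, norm_smul, Real.norm_eq_abs, abs_neg, abs_of_pos hc₀]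
      have h3 : ε' / 2 / (‖s₀‖ + 1) * (‖s₀‖ + 1) = ε'/2 := by
        field_simp
      nlinarith [norm_nonneg s₀, hc₀, hε'pos]
    have hwball : -(G ub.1 xs) + w ∈ S := by
      apply interior_subset
      apply hball'
      rw [Metric.mem_ball, dist_eq_norm]
      have h3 : (-(G ub.1 xs) + w) - (-(G ub.1 xs)) = w := by abel
      rw [h3]
      exact hnorm
    have h1 := hμpos _ hwball
    rw [map_add, map_neg] at h1
    have h2 : μ w = -(ε' / 2 / (‖s₀‖ + 1)) := by
      rw [hw, map_smul, smul_eq_mul, hμ1, mul_one]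
    linarith
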